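/- arXiv:2303.18096 — 3 statements merged into one kernel-verified Lean document; each statement's English description precedes it below -/
import Mathlib

section
/- Let m ≥ 2, s ≥ 1, let Y be an m×s matrix with nonnegative integer entries whose rows are y_1,…,y_m ∈ ℕ^s, and let κ_1,…,κ_m ∈ ℝ_{>0}. Let A(κ) be the transposed cycle Laplacian, set Σ = Yᵀ · A(κ), and let d = dim ker(Σ). If the PDSC condition holds for Σ, then there exist a partition I_1,…,I_d of {1,…,m} into nonempty sets and a basis b^1,…,b^d of ker(Σ) with supp(b^i) = I_i such that, in addition, all nonzero entries of each b^i are positive; in particular, for each i, all nonzero entries of b^i have the same sign. -/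
/-- The transposed weighted Laplacian of the directed `m`-cycle with rates `κ`:
its `j`-th column is `κ j • (e (j+1) - e j)`, indices mod `m`. -/
def cycleLaplacianT (m : ℕ) [NeZero m] (κ : Fin m → ℝ) : Matrix (Fin m) (Fin m) ℝ :=
  Matrix.of fun t j => κ j * ((if t = j + 1 then 1 else 0) - (if t = j then 1 else 0))

/-- The PDSC condition for an `s × m` real matrix `S`: with `d = dim ker S`, there is a
partition `I 1, …, I d` of `{1,…,m}` into nonempty sets and a basis `b 1, …, b d` of
`ker S` with `supp (b i) = I i` for each `i`. -/
def PDSCCondition {s m : ℕ} (S : Matrix (Fin s) (Fin m) ℝ) : Prop :=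
  ∃ (I : Fin (Module.finrank ℝ (LinearMap.ker S.mulVecLin)) → Set (Fin m))
    (b : Fin (Module.finrank ℝ (LinearMap.ker S.mulVecLin)) → Fin m → ℝ),
    (∀ i, (I i).Nonempty) ∧
    (Pairwise fun i i' => Disjoint (I i) (I i')) ∧
    (⋃ i, I i) = Set.univ ∧
    (∀ i, {j | b i j ≠ 0} = I i) ∧
    LinearIndependent ℝ b ∧
    Submodule.span ℝ (Set.range b) = LinearMap.ker S.mulVecLin

/-- **Corollary 4.4.** If a directed cycle network is a PDSC network, then the
partition and basis witnessing the PDSC condition can be chosen so that all nonzero entries of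
each basis vector are positive (in particular, of the same sign). -/
theorem pdsc_cycle_positive_basis (m s : ℕ) (hm : 2 ≤ m) [NeZero m] (hs : 1 ≤ s)
    (Y : Matrix (Fin m) (Fin s) ℕ) (κ : Fin m → ℝ) (hκ : ∀ i, 0 < κ i)
    (hPDSC : PDSCCondition ((Y.map (Nat.cast : ℕ → ℝ)).transpose * cycleLaplacianT m κ)) :
    ∃ (I : Fin (Module.finrank ℝ (LinearMap.ker
          ((Y.map (Nat.cast : ℕ → ℝ)).transpose * cycleLaplacianT m κ).mulVecLin)) → Set (Fin m))
      (b : Fin (Module.finrank ℝ (LinearMap.ker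
          ((Y.map (Nat.cast : ℕ → ℝ)).transpose * cycleLaplacianT m κ).mulVecLin)) → Fin m → ℝ),
      (∀ i, (I i).Nonempty) ∧
      (Pairwise fun i i' => Disjoint (I i) (I i')) ∧
      (⋃ i, I i) = Set.univ ∧
      (∀ i, {j | b i j ≠ 0} = I i) ∧
      LinearIndependent ℝ b ∧
      Submodule.span ℝ (Set.range b) = LinearMap.ker
          ((Y.map (Nat.cast : ℕ → ℝ)).transpose * cycleLaplacianT m κ).mulVecLin ∧
      (∀ i j, b i j ≠ 0 → 0 < b i j) := by
  obtain ⟨I, b, hne, hdisj, hcover, hsupp, hli, hspan⟩ := hPDSC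
  set w : Fin m → ℝ := fun j => (κ j)⁻¹ with hw
  have hwpos : ∀ j, 0 < w j := fun j => inv_pos.2 (hκ j)
  -- the positive vector `w` lies in the kernel
  have hA : (cycleLaplacianT m κ).mulVec w = 0 := by
    funext t
    simp only [Matrix.mulVec, dotProduct, cycleLaplacianT, Matrix.of_apply, hw,
      Pi.zero_apply]
    have h1 : ∀ j : Fin m,
        κ j * ((if t = j + 1 then (1:ℝ) else 0) - (if t = j then 1 else 0)) * (κ j)⁻¹
        = (if t - 1 = j then (1:ℝ) else 0) - (if t = j then 1 else 0) := by
      intro j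
      have hiff : t = j + 1 ↔ t - 1 = j := sub_eq_iff_eq_add.symm
      simp only [hiff]
      rw [mul_comm, ← mul_assoc, inv_mul_cancel₀ (hκ j).ne', one_mul]
    rw [Finset.sum_congr rfl fun j _ => h1 j, Finset.sum_sub_distrib]
    simp
  have hker : w ∈ LinearMap.ker
      ((Y.map (Nat.cast : ℕ → ℝ)).transpose * cycleLaplacianT m κ).mulVecLin := by
    rw [LinearMap.mem_ker, Matrix.mulVecLin_apply, ← Matrix.mulVec_mulVec, hA,
      Matrix.mulVec_zero]
  rw [← hspan] at hker
  obtain ⟨c, hc⟩ := (Submodule.mem_span_range_iff_exists_fun ℝ).mp hker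
  -- key identity on each block
  have key : ∀ i j, j ∈ I i → c i * b i j = w j := by
    intro i j hj
    have hb0 : ∀ i', i' ≠ i → b i' j = 0 := by
      intro i' hne'
      by_contra h
      have hj' : j ∈ I i' := by rw [← hsupp i']; exact h
      exact Set.disjoint_left.mp (hdisj hne') hj' hj
    have hcj : ∑ i', c i' * b i' j = w j := by
      have := congrFun hc j
      simpa [Finset.sum_apply] using this
    rw [← hcj]
    exact (Finset.sum_eq_single_of_mem (f := fun i' => c i' * b i' j) i (Finset.mem_univ i)
      (fun i' _ hne' => by show c i' * b i' j = 0; rw [hb0 i' hne', mul_zero])).symm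
  have hc0 : ∀ i, c i ≠ 0 := by
    intro i hci
    obtain ⟨j, hj⟩ := hne i
    have := key i j hj
    rw [hci, zero_mul] at this
    exact (hwpos j).ne this
  -- the rescaled basis
  refine ⟨I, fun i => c i • b i, hne, hdisj, hcover, ?_, ?_, ?_, ?_⟩
  · intro i
    ext j
    rw [← hsupp i]
    simp [hc0 i]
  · have := hli.units_smul fun i => Units.mk0 (c i) (hc0 i)
    convert this using 1
    funext i
    rfl
  · have heq : Submodule.span ℝ (Set.range fun i => c i • b i)
        = Submodule.span ℝ (Set.range b) := by
      apply le_antisymm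
      · rw [Submodule.span_le]
        rintro _ ⟨i, rfl⟩
        exact Submodule.smul_mem _ _ (Submodule.subset_span ⟨i, rfl⟩)
      · rw [Submodule.span_le]
        rintro _ ⟨i, rfl⟩
        have hbi : b i = (c i)⁻¹ • (c i • b i) := by
          rw [smul_smul, inv_mul_cancel₀ (hc0 i), one_smul]
        rw [hbi]
        exact Submodule.smul_mem _ _ (Submodule.subset_span ⟨i, rfl⟩)
    rw [heq, hspan]
  · intro i j hbj
    have hb : b i j ≠ 0 := by
      intro h
      apply hbj
      simp [h]
    have hj : j ∈ I i := by rw [← hsupp i]; exact hb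
    have hkey := key i j hj
    show 0 < c i * b i j
    rw [hkey]
    exact hwpos j
end

section
/- Let m ≥ 3 be odd. Let M be the m×m real matrix whose first column is e_1 and whose remaining m−1 columns are the vectors e_{i−2} + e_{i−1} − e_i − e_{i+1} for i = 1, 2, …, m−1, where e_1,…,e_m is the standard basis of ℝ^m and all indices are taken modulo m with representatives in {1,…,m}. Then |det(M)| = 1. -/
/-- Closed form for the entries of the inverse matrix. -/
def zf (m j t : ℕ) : ℤ :=
  if j % 2 = 0 then
    (if t % 2 = 0 then ((min (t-1) j / 2 : ℕ) : ℤ)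
     else ((j / 2 : ℕ) : ℤ) - ((min (t-1) j / 2 : ℕ) : ℤ))
  else
    (if t % 2 = 0 then (((t-1)/2 : ℕ) : ℤ) - (((min (t-1) j + 1)/2 : ℕ) : ℤ)
     else ((((m - j)/2 : ℕ) : ℤ) - 1) - ((((t-1)/2 : ℕ) : ℤ) - (((min (t-1) j + 1)/2 : ℕ) : ℤ)))

lemma zf_zero (m j : ℕ) : zf m j 0 = 0 := by
  unfold zf; split_ifs <;> omega

set_option maxHeartbeats 8000000 in
lemma zf_rec (m j t : ℕ) (hm : 3 ≤ m) (hmo : m % 2 = 1) (hj1 : 1 ≤ j) (hjm : j < m)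
    (htm : t < m) :
    zf m j ((t+3) % m) + zf m j ((t+2) % m) - zf m j ((t+1) % m) - zf m j t
      + (if t = 0 then 1 else 0) = if t = j then 1 else 0 := by
  rcases lt_or_ge (t+3) m with h3 | h3
  · rw [Nat.mod_eq_of_lt h3, Nat.mod_eq_of_lt (show t+2 < m by omega),
      Nat.mod_eq_of_lt (show t+1 < m by omega)]
    unfold zf
    rcases Nat.mod_two_eq_zero_or_one j with hj2 | hj2 <;>
    rcases Nat.mod_two_eq_zero_or_one t with ht2 | ht2 <;>
    simp only [hj2, ht2, show (t+1)%2 = 1 - t%2 from by omega,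
      show (t+2)%2 = t%2 from by omega, show (t+3)%2 = 1 - t%2 from by omega] <;>
    norm_num <;>
    split_ifs <;> omega
  · rcases lt_or_ge (t+2) m with h2 | h2
    · rw [show t + 3 = m by omega, Nat.mod_self,
        Nat.mod_eq_of_lt (show t+2 < m by omega), Nat.mod_eq_of_lt (show t+1 < m by omega)]
      unfold zf
      rcases Nat.mod_two_eq_zero_or_one j with hj2 | hj2 <;>
      rcases Nat.mod_two_eq_zero_or_one t with ht2 | ht2 <;>
      simp only [hj2, ht2, show (t+1)%2 = 1 - t%2 from by omega,
        show (t+2)%2 = t%2 from by omega] <;>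
      norm_num <;>
      split_ifs <;> omega
    · rcases lt_or_ge (t+1) m with h1 | h1
      · rw [show t + 3 = m + 1 by omega, Nat.add_mod_left,
          Nat.mod_eq_of_lt (show 1 < m by omega),
          show t + 2 = m by omega, Nat.mod_self,
          Nat.mod_eq_of_lt (show t+1 < m by omega)]
        unfold zf
        rcases Nat.mod_two_eq_zero_or_one j with hj2 | hj2 <;>
        rcases Nat.mod_two_eq_zero_or_one t with ht2 | ht2 <;>
        simp only [hj2, ht2, show (t+1)%2 = 1 - t%2 from by omega] <;>
        norm_num <;>
        split_ifs <;> omega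
      · rw [show t + 3 = m + 2 by omega, Nat.add_mod_left,
          Nat.mod_eq_of_lt (show 2 < m by omega),
          show t + 2 = m + 1 by omega, Nat.add_mod_left,
          Nat.mod_eq_of_lt (show 1 < m by omega),
          show t + 1 = m by omega, Nat.mod_self]
        unfold zf
        rcases Nat.mod_two_eq_zero_or_one j with hj2 | hj2 <;>
        rcases Nat.mod_two_eq_zero_or_one t with ht2 | ht2 <;>
        simp only [hj2, ht2] <;>
        norm_num <;>
        split_ifs <;> omega

def MzM (m : ℕ) [NeZero m] : Matrix (Fin m) (Fin m) ℤ := fun t j =>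
  if j = 0 then (if t = 0 then 1 else 0)
  else (if t = j - 3 then 1 else 0) + (if t = j - 2 then 1 else 0)
    - (if t = j - 1 then 1 else 0) - (if t = j then 1 else 0)

def UzM (m : ℕ) [NeZero m] : Matrix (Fin m) (Fin m) ℤ := fun k j =>
  if j = 0 then (if k = 0 then 1 else 0) else if k = 0 then 1 else zf m j.val k.val

open Fin.NatCast in
lemma fin_val_add (m : ℕ) [NeZero m] (t : Fin m) (c : ℕ) :
    ((t + (c : Fin m)).val) = (t.val + c) % m := by
  rw [Fin.add_def, Fin.val_natCast, Fin.val_mk]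
  conv_rhs => rw [Nat.add_mod]
  rw [Nat.mod_add_mod]

set_option maxHeartbeats 1000000 in
lemma mul_one_aux (m : ℕ) [NeZero m] (hm : 3 ≤ m) (hmo : m % 2 = 1) :
    MzM m * UzM m = 1 := by
  ext t j
  rw [Matrix.mul_apply, ← Finset.sum_erase_add _ _ (Finset.mem_univ (0 : Fin m))]
  have hconv : ∀ k ∈ Finset.univ.erase (0 : Fin m),
      MzM m t k * UzM m k j =
        ((if k = t + 3 then UzM m k j else 0) + (if k = t + 2 then UzM m k j else 0))
        - ((if k = t + 1 then UzM m k j else 0) + (if k = t then UzM m k j else 0)) := by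
    intro k hk
    have hk0 : k ≠ 0 := (Finset.mem_erase.mp hk).1
    have c3 : (t = k - 3) ↔ (k = t + 3) := by rw [eq_sub_iff_add_eq]; exact eq_comm
    have c2 : (t = k - 2) ↔ (k = t + 2) := by rw [eq_sub_iff_add_eq]; exact eq_comm
    have c1 : (t = k - 1) ↔ (k = t + 1) := by rw [eq_sub_iff_add_eq]; exact eq_comm
    have c0 : (t = k) ↔ (k = t) := eq_comm
    simp only [MzM, if_neg hk0, c3, c2, c1, c0]
    split_ifs <;> ring
  rw [Finset.sum_congr rfl hconv]
  rw [Finset.sum_sub_distrib, Finset.sum_add_distrib, Finset.sum_add_distrib]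
  rw [Finset.sum_ite_eq' _ (t+3), Finset.sum_ite_eq' _ (t+2),
    Finset.sum_ite_eq' _ (t+1), Finset.sum_ite_eq' _ t]
  by_cases hj : j = 0
  · subst hj
    have hz : ∀ a : Fin m,
        (if a ∈ Finset.univ.erase (0:Fin m) then UzM m a 0 else 0) = 0 := by
      intro a
      by_cases ha : a = 0 <;> simp [ha, UzM]
    rw [hz, hz, hz, hz]
    simp [MzM, UzM, Matrix.one_apply]
  · have hz : ∀ a : Fin m,
        (if a ∈ Finset.univ.erase (0:Fin m) then UzM m a j else 0) = zf m j.val a.val := by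
      intro a
      by_cases ha : a = 0
      · simp [ha, zf_zero]
      · simp [ha, UzM, if_neg hj]
    rw [hz, hz, hz, hz]
    have hU0 : UzM m 0 j = 1 := by simp [UzM, if_neg hj]
    have hM0 : MzM m t 0 = if t = 0 then 1 else 0 := by simp [MzM]
    rw [hU0, hM0, mul_one]
    have v3 : ((t + 3 : Fin m)).val = (t.val + 3) % m := fin_val_add m t 3
    have v2 : ((t + 2 : Fin m)).val = (t.val + 2) % m := fin_val_add m t 2
    have v1 : ((t + 1 : Fin m)).val = (t.val + 1) % m := fin_val_add m t 1
    rw [v3, v2, v1]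
    have ht0 : (t = 0) ↔ (t.val = 0) := by
      rw [Fin.ext_iff]; simp
    have htj : (t = j) ↔ (t.val = j.val) := Fin.ext_iff
    rw [Matrix.one_apply]
    simp only [ht0, htj, Fin.ext_iff, Fin.val_zero]
    have hj1 : 1 ≤ j.val := by
      rcases Nat.eq_zero_or_pos j.val with h | h
      · exact absurd (Fin.ext h) hj
      · exact h
    rw [sub_add_eq_sub_sub]
    exact zf_rec m j.val t.val hm hmo hj1 j.isLt t.isLt

/-- **from Theorem 4.7, odd case.** For odd `m ≥ 3`, the `m × m` matrix whose
first column is `e 1` and whose remaining columns are `e (i-2) + e (i-1) - e i - e (i+1)` for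
`i = 1, …, m-1` (paper indices cyclic mod `m` in `{1,…,m}`; here `0`-indexed, so column
`j ≠ 0` is `e (j-3) + e (j-2) - e (j-1) - e j` with `Fin m` arithmetic) has `|det| = 1`. -/
theorem soc_odd_det (m : ℕ) (hm : 3 ≤ m) (hodd : Odd m) [NeZero m]
    (M : Matrix (Fin m) (Fin m) ℝ)
    (hM0 : ∀ t : Fin m, M t 0 = if t = 0 then 1 else 0)
    (hM : ∀ (t j : Fin m), j ≠ 0 → M t j =
      (if t = j - 3 then 1 else 0) + (if t = j - 2 then 1 else 0)
      - (if t = j - 1 then 1 else 0) - (if t = j then 1 else 0)) :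
    |M.det| = 1 := by
  have hmo : m % 2 = 1 := Nat.odd_iff.mp hodd
  have hcast : M = (MzM m).map (Int.castRingHom ℝ) := by
    ext t j
    by_cases hj : j = 0
    · subst hj
      simp [Matrix.map_apply, MzM, hM0 t, apply_ite (Int.cast : ℤ → ℝ)]
    · rw [hM t j hj]
      simp [Matrix.map_apply, MzM, if_neg hj, apply_ite (Int.cast : ℤ → ℝ)]
  have hmul := mul_one_aux m hm hmo
  have h1 : (MzM m).det * (UzM m).det = 1 := by
    rw [← Matrix.det_mul, hmul, Matrix.det_one]
  have h2 : (MzM m).det = 1 ∨ (MzM m).det = -1 :=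
    Int.isUnit_iff.mp (IsUnit.of_mul_eq_one _ h1)
  have h3 : M.det = ((MzM m).det : ℝ) := by
    rw [hcast, ← RingHom.mapMatrix_apply, ← RingHom.map_det]
    rfl
  rw [h3]
  rcases h2 with h | h <;> rw [h] <;> norm_num
end

section
/- Let m ≥ 4 be even. Let M be the m×m real matrix whose first two columns are e_1 and e_2 and whose remaining m−2 columns are the vectors e_{i−2} + e_{i−1} − e_i − e_{i+1} for i = 1, 2, …, m−2, where e_1,…,e_m is the standard basis of ℝ^m and all indices are taken modulo m with representatives in {1,…,m}. Then |det(M)| = m/2. -/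
open Finset
open Fin.NatCast
set_option maxHeartbeats 2000000

noncomputable def socU (m r c : ℕ) : ℝ :=
  if r = 0 then (if c = 0 then 1 else if c = m-2 then -1 else if c = m-1 then 1
    else if c = 2 then 1 else 0)
  else if r = 1 then (if c = 1 then 1 else if c = m-2 then -1 else if c = m-1 then -1
    else if c = 2 ∨ c = 3 then 1 else 0)
  else if r = m-1 then (if c = m-1 then (m:ℝ)/((m:ℝ)-2) else 0)
  else if r = m-2 then (if c = m-2 then 1 else if c = m-1 then -2/((m:ℝ)-2) else 0)
  else if r % 2 = 0 then (if c = r then -1 else if c = r+1 then 2/(r:ℝ)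
    else if c = m-1 then -2/(r:ℝ) else if c = r+2 ∧ r + 6 ≤ m then 1 else 0)
  else (if c = r then -((r:ℝ)+1)/((r:ℝ)-1) else if c = m-1 then 2/((r:ℝ)-1)
    else if c = r+2 then 1 else 0)

noncomputable def socE (m a b : ℕ) : ℝ :=
  if b = 0 then (if a = 0 then 1 else 0)
  else if b = 1 then (if a = 1 then 1 else 0)
  else if b = m-2 then (if a = m-2 then (1:ℝ) else 0)+(if a = m-1 then 1 else 0)
    -(if a = 0 then 1 else 0)-(if a = 1 then 1 else 0)
  else if b = m-1 then (if a = m-1 then (1:ℝ) else 0)+(if a = 0 then 1 else 0)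
    -(if a = 1 then 1 else 0)-(if a = 2 then 1 else 0)
  else (if a = b-2 then (1:ℝ) else 0)+(if a = b-1 then 1 else 0)
    -(if a = b then 1 else 0)-(if a = b+1 then 1 else 0)

noncomputable def socC (i : ℕ) : ℝ :=
  if i ≤ 1 then 0 else if i % 2 = 0 then -1 else -((i:ℝ)-1)/((i:ℝ)+1)

-- region lemmas for socU
lemma socU_r0 (m c : ℕ) : socU m 0 c = (if c = 0 then 1 else if c = m-2 then -1
    else if c = m-1 then 1 else if c = 2 then 1 else 0) := by unfold socU; simp

lemma socU_r1 {m : ℕ} (hm : 4 ≤ m) (c : ℕ) : socU m 1 c =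
    (if c = 1 then 1 else if c = m-2 then -1 else if c = m-1 then -1
      else if c = 2 ∨ c = 3 then 1 else 0) := by
  unfold socU; rw [if_neg (by omega), if_pos rfl]

lemma socU_rlast {m : ℕ} (hm : 4 ≤ m) (c : ℕ) : socU m (m-1) c =
    (if c = m-1 then (m:ℝ)/((m:ℝ)-2) else 0) := by
  unfold socU; rw [if_neg (by omega), if_neg (by omega), if_pos rfl]

lemma socU_rpen {m : ℕ} (hm : 4 ≤ m) (c : ℕ) : socU m (m-2) c =
    (if c = m-2 then 1 else if c = m-1 then -2/((m:ℝ)-2) else 0) := by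
  unfold socU; rw [if_neg (by omega), if_neg (by omega), if_neg (by omega), if_pos rfl]

lemma socU_reven {m r : ℕ} (hm : 4 ≤ m) (h1 : 2 ≤ r) (h2 : r ≤ m-4) (h3 : r % 2 = 0)
    (hme : m % 2 = 0) (c : ℕ) : socU m r c =
    (if c = r then -1 else if c = r+1 then 2/(r:ℝ)
      else if c = m-1 then -2/(r:ℝ) else if c = r+2 ∧ r + 6 ≤ m then 1 else 0) := by
  unfold socU
  rw [if_neg (by omega), if_neg (by omega), if_neg (by omega), if_neg (by omega), if_pos h3]

lemma socU_rodd {m r : ℕ} (hm : 4 ≤ m) (h1 : 3 ≤ r) (h2 : r ≤ m-3) (h3 : r % 2 = 1)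
    (hme : m % 2 = 0) (c : ℕ) : socU m r c =
    (if c = r then -((r:ℝ)+1)/((r:ℝ)-1) else if c = m-1 then 2/((r:ℝ)-1)
      else if c = r+2 then 1 else 0) := by
  unfold socU
  rw [if_neg (by omega), if_neg (by omega), if_neg (by omega), if_neg (by omega),
    if_neg (by omega)]

-- region lemmas for socE
lemma socE_b0 (m a : ℕ) : socE m a 0 = (if a = 0 then 1 else 0) := by unfold socE; simp

lemma socE_b1 (m a : ℕ) : socE m a 1 = (if a = 1 then 1 else 0) := by
  unfold socE; rw [if_neg (by omega), if_pos rfl]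

lemma socE_bpen {m : ℕ} (hm : 4 ≤ m) (a : ℕ) : socE m a (m-2) =
    (if a = m-2 then (1:ℝ) else 0)+(if a = m-1 then 1 else 0)
    -(if a = 0 then 1 else 0)-(if a = 1 then 1 else 0) := by
  unfold socE; rw [if_neg (by omega), if_neg (by omega), if_pos rfl]

lemma socE_blast {m : ℕ} (hm : 4 ≤ m) (a : ℕ) : socE m a (m-1) =
    (if a = m-1 then (1:ℝ) else 0)+(if a = 0 then 1 else 0)
    -(if a = 1 then 1 else 0)-(if a = 2 then 1 else 0) := by
  unfold socE; rw [if_neg (by omega), if_neg (by omega), if_neg (by omega), if_pos rfl]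

lemma socE_mid {m b : ℕ} (hm : 4 ≤ m) (h1 : 2 ≤ b) (h2 : b ≤ m-3) (a : ℕ) : socE m a b =
    (if a = b-2 then (1:ℝ) else 0)+(if a = b-1 then 1 else 0)
    -(if a = b then 1 else 0)-(if a = b+1 then 1 else 0) := by
  unfold socE
  rw [if_neg (by omega), if_neg (by omega), if_neg (by omega), if_neg (by omega)]

lemma socC_le1 {i : ℕ} (h : i ≤ 1) : socC i = 0 := by unfold socC; rw [if_pos h]
lemma socC_even {i : ℕ} (h1 : 2 ≤ i) (h2 : i % 2 = 0) : socC i = -1 := by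
  unfold socC; rw [if_neg (by omega), if_pos h2]
lemma socC_odd {i : ℕ} (h1 : 2 ≤ i) (h2 : i % 2 = 1) : socC i = -((i:ℝ)-1)/((i:ℝ)+1) := by
  unfold socC; rw [if_neg (by omega), if_neg (by omega)]


lemma socU_lower {m a b : ℕ} (hm : 4 ≤ m) (hb : b < a) (ha : a < m) : socU m a b = 0 := by
  unfold socU
  split_ifs <;> first | rfl | omega

lemma socU_row0 {m : ℕ} (hm : 4 ≤ m) (hme : m % 2 = 0) (b : ℕ) (hb : b < m) :
    socU m 0 b = socE m 0 b := by
  have hB : b = 0 ∨ b = 1 ∨ b = m-2 ∨ b = m-1 ∨ (2 ≤ b ∧ b ≤ m-3) := by omega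
  rw [socU_r0]
  rcases hB with rfl | rfl | rfl | rfl | ⟨hb1, hb2⟩ <;>
    [rw [socE_b0]; rw [socE_b1]; rw [socE_bpen hm]; rw [socE_blast hm];
      rw [socE_mid hm hb1 hb2]] <;>
    split_ifs <;> first | (exfalso; omega) | contradiction | (exfalso; tauto) | (norm_num; done) | (push_cast; field_simp; ring) | (push_cast; field_simp) | norm_num

lemma socU_key {m : ℕ} (hm : 4 ≤ m) (hme : m % 2 = 0) (a b : ℕ) (ha : a + 1 < m)
    (hb : b < m) :
    socU m (a+1) b = socE m (a+1) b + socC a * socU m a b := by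
  have hB : b = 0 ∨ b = 1 ∨ b = m-2 ∨ b = m-1 ∨ (2 ≤ b ∧ b ≤ m-3) := by omega
  have hA0 : a = 0 ∨ a = 1 ∨ a = m-2 ∨ (a = m-3 ∧ 2 ≤ a) ∨ (2 ≤ a ∧ a ≤ m-4 ∧ a % 2 = 0)
      ∨ (3 ≤ a ∧ a ≤ m-5 ∧ a % 2 = 1) := by omega
  rcases hA0 with rfl | rfl | rfl | ⟨rfl, ha3'⟩ | ⟨h1, h2, h3⟩ | ⟨h1, h2, h3⟩
  · -- a = 0 : row 1
    rw [socU_r1 hm, socC_le1 (by norm_num), zero_mul, add_zero]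
    rcases hB with rfl | rfl | rfl | rfl | ⟨hb1, hb2⟩ <;>
      [rw [socE_b0]; rw [socE_b1]; rw [socE_bpen hm]; rw [socE_blast hm];
        rw [socE_mid hm hb1 hb2]] <;>
      split_ifs <;> first | (exfalso; omega) | contradiction | (exfalso; tauto) | (norm_num; done) | (push_cast; field_simp; ring) | (push_cast; field_simp) | norm_num
  · -- a = 1 : row 2
    rw [socU_r1 hm, socC_le1 (by norm_num), zero_mul, add_zero]
    rcases (by omega : m = 4 ∨ 6 ≤ m) with rfl | hm6
    · rw [socU_rpen (by norm_num)]
      rcases hB with rfl | rfl | rfl | rfl | ⟨hb1, hb2⟩ <;>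
      [rw [socE_b0]; rw [socE_b1]; rw [socE_bpen hm]; rw [socE_blast hm];
        rw [socE_mid hm hb1 hb2]] <;>
      split_ifs <;> first | (exfalso; omega) | contradiction | (exfalso; tauto) | (norm_num; done) | (push_cast; field_simp; ring) | (push_cast; field_simp) | norm_num
    · rw [socU_reven hm (by norm_num) (by omega) (by norm_num) hme]
      rcases hB with rfl | rfl | rfl | rfl | ⟨hb1, hb2⟩ <;>
      [rw [socE_b0]; rw [socE_b1]; rw [socE_bpen hm]; rw [socE_blast hm];
        rw [socE_mid hm hb1 hb2]] <;>
      split_ifs <;> first | (exfalso; omega) | contradiction | (exfalso; tauto) | (norm_num; done) | (push_cast; field_simp; ring) | (push_cast; field_simp) | norm_num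
  · -- a = m-2 : row m-1
    have hR : ((m:ℝ)) - 2 ≠ 0 := by
      have : (4:ℝ) ≤ (m:ℝ) := by exact_mod_cast hm
      linarith
    rw [(by omega : m - 2 + 1 = m - 1), socU_rlast hm, socU_rpen hm,
      socC_even (by omega) (by omega)]
    rcases hB with rfl | rfl | rfl | rfl | ⟨hb1, hb2⟩ <;>
      [rw [socE_b0]; rw [socE_b1]; rw [socE_bpen hm]; rw [socE_blast hm];
        rw [socE_mid hm hb1 hb2]] <;>
      split_ifs <;> first | (exfalso; omega) | contradiction | (exfalso; tauto) | (norm_num; done) | (push_cast; field_simp; ring) | (push_cast; field_simp) | norm_num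
  · -- a = m-3 : row m-2
    have hm6 : 6 ≤ m := by omega
    have hmR : (6:ℝ) ≤ (m:ℝ) := by exact_mod_cast hm6
    have hR2 : ((m:ℝ)) - 2 ≠ 0 := by linarith
    have hR4 : ((m:ℝ)) - 4 ≠ 0 := by linarith
    have hcast3 : ((m - 3 : ℕ) : ℝ) = (m:ℝ) - 3 := by
      have h3 : (3:ℕ) ≤ m := by omega
      push_cast [h3]; ring
    have hR3 : ((m:ℝ)) - 3 - 1 ≠ 0 := by linarith
    have hQ1 : ((m:ℝ)) - 3 + 1 ≠ 0 := by linarith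
    have hD2 : (8 - (m:ℝ) * 6 + (m:ℝ)^2) ≠ 0 := by
      have he : (8 - (m:ℝ) * 6 + (m:ℝ)^2) = ((m:ℝ)-2)*((m:ℝ)-4) := by ring
      rw [he]; exact mul_ne_zero hR2 hR4
    rw [(by omega : m - 3 + 1 = m - 2), socU_rpen hm,
      socU_rodd hm (by omega) (by omega) (by omega) hme,
      socC_odd (by omega) (by omega), hcast3]
    rcases hB with rfl | rfl | rfl | rfl | ⟨hb1, hb2⟩ <;>
      [rw [socE_b0]; rw [socE_b1]; rw [socE_bpen hm]; rw [socE_blast hm];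
        rw [socE_mid hm hb1 hb2]] <;>
      split_ifs <;> first | (exfalso; omega) | contradiction | (exfalso; tauto) | (norm_num; done) | (push_cast; field_simp; ring) | (push_cast; field_simp) | norm_num
  · -- even middle a : row a+1 odd middle
    have haR : (2:ℝ) ≤ (a:ℝ) := by exact_mod_cast h1
    have hR0 : (a:ℝ) ≠ 0 := by linarith
    have hR1 : (a:ℝ) + 1 - 1 ≠ 0 := by linarith
    rw [socU_rodd hm (by omega) (by omega) (by omega) hme,
      socU_reven hm h1 h2 h3 hme, socC_even h1 h3]
    rcases hB with rfl | rfl | rfl | rfl | ⟨hb1, hb2⟩ <;>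
      [rw [socE_b0]; rw [socE_b1]; rw [socE_bpen hm]; rw [socE_blast hm];
        rw [socE_mid hm hb1 hb2]] <;>
      split_ifs <;> first | (exfalso; omega) | contradiction | (exfalso; tauto) | (norm_num; done) | (push_cast; field_simp; ring) | (push_cast; field_simp) | norm_num
  · -- odd middle a : row a+1 even middle
    have haR : (3:ℝ) ≤ (a:ℝ) := by exact_mod_cast h1
    have hR0 : (a:ℝ) ≠ 0 := by linarith
    have hRm1 : (a:ℝ) - 1 ≠ 0 := by linarith
    have hRp1 : (a:ℝ) + 1 ≠ 0 := by linarith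
    rw [socU_reven hm (by omega) (by omega) (by omega) hme,
      socU_rodd hm h1 (by omega) h3 hme, socC_odd (by omega) h3]
    rcases hB with rfl | rfl | rfl | rfl | ⟨hb1, hb2⟩ <;>
      [rw [socE_b0]; rw [socE_b1]; rw [socE_bpen hm]; rw [socE_blast hm];
        rw [socE_mid hm hb1 hb2]] <;>
      split_ifs <;> first | (exfalso; omega) | contradiction | (exfalso; tauto) | (norm_num; done) | (push_cast; field_simp; ring) | (push_cast; field_simp) | norm_num

noncomputable def socG (i : ℕ) : ℝ :=
  if i ≤ 1 then 1 else if i % 2 = 0 then -1 else -((i:ℝ)+1)/((i:ℝ)-1)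

lemma socG_prod (k : ℕ) (hk : 1 ≤ k) : ∏ i ∈ range (2*k), socG i = (k:ℝ) := by
  induction k, hk using Nat.le_induction with
  | base =>
    rw [show 2*1 = 0+1+1 from rfl, prod_range_succ, prod_range_succ, prod_range_zero]
    norm_num [socG]
  | succ k hk ih =>
    have hkR : (k:ℝ) ≠ 0 := by
      have : (1:ℝ) ≤ (k:ℝ) := by exact_mod_cast hk
      linarith
    have h2k : (2*(k:ℝ)) - 1 ≠ 0 := by
      have : (1:ℝ) ≤ (k:ℝ) := by exact_mod_cast hk
      linarith
    rw [show 2*(k+1) = (2*k)+1+1 from by ring, prod_range_succ, prod_range_succ, ih]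
    have hg1 : socG (2*k) = -1 := by
      unfold socG; rw [if_neg (by omega), if_pos (by omega)]
    have hg2 : socG (2*k+1) = -((2*(k:ℝ))+2)/((2*(k:ℝ))) := by
      unfold socG; rw [if_neg (by omega), if_neg (by omega)]
      push_cast; ring_nf
    rw [hg1, hg2]
    push_cast
    field_simp

lemma socU_diag_prod {m : ℕ} (hm : 4 ≤ m) (hme : m % 2 = 0) :
    ∏ i ∈ range m, socU m i i = (m:ℝ)/2 := by
  have hmR : (4:ℝ) ≤ (m:ℝ) := by exact_mod_cast hm
  have hR2 : ((m:ℝ)) - 2 ≠ 0 := by linarith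
  have e0 : ∏ i ∈ range m, socU m i i
      = (∏ i ∈ range (m-2), socU m i i) * socU m (m-2) (m-2) * socU m (m-1) (m-1) := by
    rw [show m = (m-2)+1+1 from by omega]
    rw [prod_range_succ, prod_range_succ]
    rw [show (m-2)+1+1-2 = m-2 from by omega, show (m-2)+1+1-1 = m-1 from by omega,
      show (m-2)+1 = m-1 from by omega]
  have e1 : ∏ i ∈ range (m-2), socU m i i = ∏ i ∈ range (m-2), socG i := by
    apply Finset.prod_congr rfl
    intro i hi
    rw [Finset.mem_range] at hi
    rcases (by omega : i = 0 ∨ i = 1 ∨ (2 ≤ i ∧ i % 2 = 0) ∨ (3 ≤ i ∧ i % 2 = 1))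
      with rfl | rfl | ⟨hi1, hi2⟩ | ⟨hi1, hi2⟩
    · rw [socU_r0]; unfold socG
      rw [if_pos rfl, if_pos (by omega)]
    · rw [socU_r1 hm]; unfold socG
      rw [if_pos rfl, if_pos (by omega)]
    · rw [socU_reven hm hi1 (by omega) hi2 hme, if_pos rfl]
      unfold socG; rw [if_neg (by omega), if_pos hi2]
    · rw [socU_rodd hm hi1 (by omega) hi2 hme, if_pos rfl]
      unfold socG; rw [if_neg (by omega), if_neg (by omega)]
  have e2 : socU m (m-2) (m-2) = 1 := by
    rw [socU_rpen hm, if_pos rfl]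
  have e3 : socU m (m-1) (m-1) = (m:ℝ)/((m:ℝ)-2) := by
    rw [socU_rlast hm, if_pos rfl]
  have hk : m - 2 = 2 * (m/2 - 1) := by omega
  have e4 : ∏ i ∈ range (m-2), socG i = ((m/2 - 1 : ℕ) : ℝ) := by
    rw [hk]; exact socG_prod _ (by omega)
  have e5 : ((m/2 - 1 : ℕ) : ℝ) = ((m:ℝ) - 2)/2 := by
    have : (((m/2 - 1) : ℕ) : ℝ) * 2 = (m:ℝ) - 2 := by
      rw [show ((m:ℝ) - 2) = ((m - 2 : ℕ) : ℝ) from by push_cast [show 2 ≤ m from by omega]; ring]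
      rw [hk]; push_cast; ring
    linarith
  rw [e0, e1, e2, e3, e4, e5]
  field_simp

lemma fin_sub_eq_iff {N : ℕ} [NeZero N] (t k : Fin N) (c : ℕ) (hc : c ≤ N) :
    t = k - (c : Fin N) ↔ (t.val + c = k.val ∨ t.val + c = N + k.val) := by
  rw [eq_comm, sub_eq_iff_eq_add, eq_comm, Fin.ext_iff, Fin.val_add, Fin.val_natCast,
    Nat.add_mod_mod]
  have ht := t.isLt; have hk := k.isLt
  have hmod : (t.val + c) % N = if t.val + c < N then t.val + c else t.val + c - N := by
    split_ifs with h
    · exact Nat.mod_eq_of_lt h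
    · rw [Nat.mod_eq_sub_mod (le_of_not_gt h)]
      exact Nat.mod_eq_of_lt (by omega)
  rw [hmod]
  split_ifs with h <;> omega



/-- **from Theorem 4.7, even case.** For even `m ≥ 4`, the `m × m` matrix whose
first two columns are `e 1`, `e 2` and whose remaining columns are
`e (i-2) + e (i-1) - e i - e (i+1)` for `i = 1, …, m-2` (paper indices cyclic mod `m` in
`{1,…,m}`; here `0`-indexed, so column `j` with `j ∉ {0,1}` corresponds to `i = j - 1` and is
`e (j-4) + e (j-3) - e (j-2) - e (j-1)` with `Fin m` arithmetic) has `|det| = m/2`. -/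
theorem soc_even_det (m : ℕ) (hm : 4 ≤ m) (heven : Even m) [NeZero m]
    (M : Matrix (Fin m) (Fin m) ℝ)
    (hM0 : ∀ t : Fin m, M t 0 = if t = 0 then 1 else 0)
    (hM1 : ∀ t : Fin m, M t 1 = if t = 1 then 1 else 0)
    (hM : ∀ (t j : Fin m), j ≠ 0 → j ≠ 1 → M t j =
      (if t = j - 4 then 1 else 0) + (if t = j - 3 then 1 else 0)
      - (if t = j - 2 then 1 else 0) - (if t = j - 1 then 1 else 0)) :
    |M.det| = (m : ℝ) / 2 := by
  have hme : m % 2 = 0 := Nat.even_iff.mp heven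
  obtain ⟨n, rfl⟩ : ∃ n, m = n + 1 := ⟨m - 1, by omega⟩
  have hn : 3 ≤ n := by omega
  -- the permutation ρ
  have hb1 : ∀ x : Fin (n+1),
      (if x.val < 2 then x.val else if x.val = n then 2 else x.val + 1) < n + 1 := by
    intro x; have := x.isLt; split_ifs <;> omega
  have hb2 : ∀ x : Fin (n+1),
      (if x.val < 2 then x.val else if x.val = 2 then n else x.val - 1) < n + 1 := by
    intro x; have := x.isLt; split_ifs <;> omega
  set ρ : Equiv.Perm (Fin (n+1)) := {
    toFun := fun x => ⟨if x.val < 2 then x.val else if x.val = n then 2 else x.val + 1, hb1 x⟩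
    invFun := fun x => ⟨if x.val < 2 then x.val else if x.val = 2 then n else x.val - 1, hb2 x⟩
    left_inv := by
      intro x; have := x.isLt; apply Fin.ext; simp only; split_ifs <;> omega
    right_inv := by
      intro x; have := x.isLt; apply Fin.ext; simp only; split_ifs <;> omega } with hρdef
  have hρ : ∀ x : Fin (n+1), (ρ x).val
      = if x.val < 2 then x.val else if x.val = n then 2 else x.val + 1 := fun _ => rfl
  set σ : Equiv.Perm (Fin (n+1)) := ρ.trans ρ with hσdef
  have hsign : Equiv.Perm.sign σ = 1 := by
    rw [show σ = ρ * ρ from rfl, map_mul, Int.units_mul_self]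
  have hσv : ∀ j : Fin (n+1), (σ j).val
      = if j.val < 2 then j.val else if j.val = n-1 then 2
        else if j.val = n then 3 else j.val + 2 := by
    intro j
    have hj := j.isLt
    show (ρ (ρ j)).val = _
    rw [hρ, hρ]
    split_ifs <;> omega
  set Mp : Matrix (Fin (n+1)) (Fin (n+1)) ℝ := M.submatrix id σ with hMpdef
  have hdetMp : Mp.det = M.det := by
    rw [hMpdef, Matrix.det_permute' σ M, hsign]
    simp
  have hv1 : (1 : Fin (n+1)).val = 1 := by rw [Fin.val_one']; exact Nat.mod_eq_of_lt (by omega)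
  -- entries of Mp
  have hval : ∀ t j : Fin (n+1), Mp t j = socE (n+1) t.val j.val := by
    intro t j
    have ht := t.isLt; have hj := j.isLt
    have hsj := hσv j
    rw [hMpdef, Matrix.submatrix_apply, id_eq]
    rcases (by omega : j.val = 0 ∨ j.val = 1 ∨ j.val = n-1 ∨ j.val = n
        ∨ (2 ≤ j.val ∧ j.val ≤ n-2)) with h | h | h | h | ⟨hA, hB⟩
    · have hσ0 : σ j = 0 := by
        apply Fin.ext; rw [hsj, Fin.val_zero]; split_ifs <;> omega
      rw [hσ0, hM0, h, socE_b0]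
      simp only [Fin.ext_iff, Fin.val_zero]
    · have hσ1 : σ j = 1 := by
        apply Fin.ext; rw [hsj, hv1]; split_ifs <;> omega
      rw [hσ1, hM1, h, socE_b1]
      have h1m : 1 % (n+1) = 1 := Nat.mod_eq_of_lt (by omega)
      simp [Fin.ext_iff, hv1, h1m]
    · -- j.val = n-1 : old column 2
      have hs2 : (σ j).val = 2 := by rw [hsj]; split_ifs <;> omega
      have h0 : σ j ≠ 0 := by
        intro hc; rw [hc, Fin.val_zero] at hs2; omega
      have h1 : σ j ≠ 1 := by
        intro hc; rw [hc, hv1] at hs2; omega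
      rw [hM t (σ j) h0 h1]
      have E4 : (t = σ j - (4 : Fin (n+1))) ↔ t.val = (n+1)-2 := by
        rw [show (4 : Fin (n+1)) = ((4:ℕ) : Fin (n+1)) from by norm_cast,
          fin_sub_eq_iff t (σ j) 4 (by omega), hs2]
        omega
      have E3 : (t = σ j - (3 : Fin (n+1))) ↔ t.val = (n+1)-1 := by
        rw [show (3 : Fin (n+1)) = ((3:ℕ) : Fin (n+1)) from by norm_cast,
          fin_sub_eq_iff t (σ j) 3 (by omega), hs2]
        omega
      have E2 : (t = σ j - (2 : Fin (n+1))) ↔ t.val = 0 := by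
        rw [show (2 : Fin (n+1)) = ((2:ℕ) : Fin (n+1)) from by norm_cast,
          fin_sub_eq_iff t (σ j) 2 (by omega), hs2]
        omega
      have E1 : (t = σ j - (1 : Fin (n+1))) ↔ t.val = 1 := by
        rw [show (1 : Fin (n+1)) = ((1:ℕ) : Fin (n+1)) from by norm_cast,
          fin_sub_eq_iff t (σ j) 1 (by omega), hs2]
        omega
      rw [show j.val = (n+1)-2 from by omega, socE_bpen (by omega),
        if_congr E4 rfl rfl, if_congr E3 rfl rfl, if_congr E2 rfl rfl, if_congr E1 rfl rfl]
    · -- j.val = n : old column 3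
      have hs2 : (σ j).val = 3 := by rw [hsj]; split_ifs <;> omega
      have h0 : σ j ≠ 0 := by
        intro hc; rw [hc, Fin.val_zero] at hs2; omega
      have h1 : σ j ≠ 1 := by
        intro hc; rw [hc, hv1] at hs2; omega
      rw [hM t (σ j) h0 h1]
      have E4 : (t = σ j - (4 : Fin (n+1))) ↔ t.val = (n+1)-1 := by
        rw [show (4 : Fin (n+1)) = ((4:ℕ) : Fin (n+1)) from by norm_cast,
          fin_sub_eq_iff t (σ j) 4 (by omega), hs2]
        omega
      have E3 : (t = σ j - (3 : Fin (n+1))) ↔ t.val = 0 := by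
        rw [show (3 : Fin (n+1)) = ((3:ℕ) : Fin (n+1)) from by norm_cast,
          fin_sub_eq_iff t (σ j) 3 (by omega), hs2]
        omega
      have E2 : (t = σ j - (2 : Fin (n+1))) ↔ t.val = 1 := by
        rw [show (2 : Fin (n+1)) = ((2:ℕ) : Fin (n+1)) from by norm_cast,
          fin_sub_eq_iff t (σ j) 2 (by omega), hs2]
        omega
      have E1 : (t = σ j - (1 : Fin (n+1))) ↔ t.val = 2 := by
        rw [show (1 : Fin (n+1)) = ((1:ℕ) : Fin (n+1)) from by norm_cast,
          fin_sub_eq_iff t (σ j) 1 (by omega), hs2]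
        omega
      rw [show j.val = (n+1)-1 from by omega, socE_blast (by omega),
        if_congr E4 rfl rfl, if_congr E3 rfl rfl, if_congr E2 rfl rfl, if_congr E1 rfl rfl]
    · -- middle columns
      have hs2 : (σ j).val = j.val + 2 := by rw [hsj]; split_ifs <;> omega
      have h0 : σ j ≠ 0 := by
        intro hc; rw [hc, Fin.val_zero] at hs2; omega
      have h1 : σ j ≠ 1 := by
        intro hc; rw [hc, hv1] at hs2; omega
      rw [hM t (σ j) h0 h1]
      have E4 : (t = σ j - (4 : Fin (n+1))) ↔ t.val = j.val - 2 := by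
        rw [show (4 : Fin (n+1)) = ((4:ℕ) : Fin (n+1)) from by norm_cast,
          fin_sub_eq_iff t (σ j) 4 (by omega), hs2]
        omega
      have E3 : (t = σ j - (3 : Fin (n+1))) ↔ t.val = j.val - 1 := by
        rw [show (3 : Fin (n+1)) = ((3:ℕ) : Fin (n+1)) from by norm_cast,
          fin_sub_eq_iff t (σ j) 3 (by omega), hs2]
        omega
      have E2 : (t = σ j - (2 : Fin (n+1))) ↔ t.val = j.val := by
        rw [show (2 : Fin (n+1)) = ((2:ℕ) : Fin (n+1)) from by norm_cast,
          fin_sub_eq_iff t (σ j) 2 (by omega), hs2]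
        omega
      have E1 : (t = σ j - (1 : Fin (n+1))) ↔ t.val = j.val + 1 := by
        rw [show (1 : Fin (n+1)) = ((1:ℕ) : Fin (n+1)) from by norm_cast,
          fin_sub_eq_iff t (σ j) 1 (by omega), hs2]
        omega
      rw [socE_mid (by omega) hA (by omega),
        if_congr E4 rfl rfl, if_congr E3 rfl rfl, if_congr E2 rfl rfl, if_congr E1 rfl rfl]
  -- the upper triangular matrix U
  set U : Matrix (Fin (n+1)) (Fin (n+1)) ℝ :=
    Matrix.of (fun t j => socU (n+1) t.val j.val) with hUdef
  have hdetU : U.det = Mp.det := by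
    apply Matrix.det_eq_of_forall_row_eq_smul_add_pred (fun i : Fin n => socC i.val)
    · intro j
      rw [hval]
      show socU (n+1) (0 : Fin (n+1)).val j.val = _
      rw [Fin.val_zero]
      exact socU_row0 hm hme j.val j.isLt
    · intro i j
      rw [hval]
      show socU (n+1) (Fin.succ i).val j.val
        = _ + socC i.val * socU (n+1) (Fin.castSucc i).val j.val
      rw [Fin.val_succ, Fin.coe_castSucc]
      exact socU_key hm hme i.val j.val (by have := i.isLt; omega) j.isLt
  have htri : U.BlockTriangular id := by
    intro i j hij
    show socU (n+1) i.val j.val = 0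
    exact socU_lower hm hij i.isLt
  have hdet2 : U.det = ((n+1:ℕ):ℝ)/2 := by
    rw [Matrix.det_of_upperTriangular htri]
    have : ∀ i : Fin (n+1), U i i = socU (n+1) i.val i.val := fun i => rfl
    calc ∏ i : Fin (n+1), U i i = ∏ i : Fin (n+1), socU (n+1) i.val i.val := by
          exact Finset.prod_congr rfl (fun i _ => this i)
      _ = ∏ i ∈ range (n+1), socU (n+1) i i :=
          Fin.prod_univ_eq_prod_range (fun i => socU (n+1) i i) (n+1)
      _ = ((n+1:ℕ):ℝ)/2 := socU_diag_prod hm hme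
  have : M.det = ((n+1:ℕ):ℝ)/2 := by rw [← hdetMp, ← hdetU, hdet2]
  rw [this, abs_of_nonneg (by positivity)]
end
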